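/- Let p ∈ (0,1] and define the p-modified harmonic function H_p(x) = ∫_0^1 (1 - (1 - p + pt)^x)/(1 - t) dt for x ≥ 0. Then H_p(x) = ψ(x+1) + γ + ln p + ∫_0^{1-p} z^x/(1-z) dz. -/

import Mathlib

open Real Filter Topology MeasureTheory intervalIntegral Set Finset

-- bound: 1 - t^x ≤ max 1 x * (1 - t) for t ∈ [0,1]
lemma key_bound {x t : ℝ} (hx : 0 ≤ x) (ht0 : 0 ≤ t) (ht1 : t ≤ 1) :
    1 - t ^ x ≤ max 1 x * (1 - t) := by
  rcases le_total x 1 with h | h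
  · calc 1 - t ^ x ≤ 1 - t := by
          rcases eq_or_lt_of_le ht0 with h0 | h0
          · rcases eq_or_lt_of_le hx with hx0 | hx0
            · rw [← h0, ← hx0, Real.rpow_zero]; norm_num
            · rw [← h0, Real.zero_rpow hx0.ne']
          · have := Real.rpow_le_rpow_of_exponent_ge h0 ht1 h
            rw [Real.rpow_one] at this; linarith
      _ ≤ max 1 x * (1 - t) := by
          nlinarith [le_max_left 1 x]
  · have hb : 1 + x * (t - 1) ≤ (1 + (t - 1)) ^ x :=
      one_add_mul_self_le_rpow_one_add (by linarith) h
    rw [show 1 + (t-1) = t by ring] at hb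
    calc 1 - t ^ x ≤ x * (1 - t) := by nlinarith
      _ ≤ max 1 x * (1 - t) := by nlinarith [le_max_right 1 x]

lemma tendsto_log_sub_sum {x : ℝ} (hx : 0 ≤ x) :
    Tendsto (fun n : ℕ => Real.log (x + n) - ∑ k ∈ Finset.range n, 1 / (x + k + 1)) atTop
      (𝓝 (deriv (fun y => Real.log (Real.Gamma y)) (x + 1))) := by
  set f : ℝ → ℝ := fun y => Real.log (Real.Gamma y) with hf
  have hc : ConvexOn ℝ (Ioi 0) f := convexOn_log_Gamma
  have h_rec : ∀ y : ℝ, 0 < y → f (y + 1) = f y + log y := fun y hy => by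
    simp only [hf, Gamma_add_one hy.ne', log_mul hy.ne' (Gamma_pos_of_pos hy).ne', add_comm]
  have hder : ∀ {y : ℝ}, 0 < y → DifferentiableAt ℝ f y := fun {y} hy => by
    refine ((differentiableAt_Gamma ?_).log (Gamma_ne_zero ?_)) <;>
    exact fun m => ne_of_gt (by have := m.cast_nonneg (α := ℝ); linarith)
  have hder_rec : ∀ y : ℝ, 0 < y → deriv f (y + 1) = deriv f y + 1 / y := fun y hy => by
    rw [← deriv_comp_add_const, one_div, ← Real.deriv_log,
      ← deriv_add (hder <| by positivity) (differentiableAt_log hy.ne')]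
    apply Filter.EventuallyEq.deriv_eq
    filter_upwards [eventually_gt_nhds hy] using h_rec
  have hslope : ∀ y : ℝ, 0 < y → deriv f y ≤ log y ∧ log y ≤ deriv f (y + 1) := by
    intro y hy
    have hs : slope f y (y + 1) = log y := by
      rw [slope_def_field, show y + 1 - y = (1:ℝ) by ring, div_one, h_rec y hy,
        add_sub_cancel_left]
    constructor
    · rw [← hs]
      exact hc.deriv_le_slope (Set.mem_Ioi.mpr hy) (Set.mem_Ioi.mpr (by linarith))
        (by linarith) (hder hy)
    · rw [← hs]
      exact hc.slope_le_deriv (Set.mem_Ioi.mpr hy) (Set.mem_Ioi.mpr (by linarith))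
        (by linarith) (hder <| by linarith)
  have hsum : ∀ n : ℕ, deriv f (x + 1 + n) =
      deriv f (x + 1) + ∑ k ∈ Finset.range n, 1 / (x + k + 1) := by
    intro n
    induction n with
    | zero => simp
    | succ n ih =>
      have h1 : x + 1 + (n + 1 : ℕ) = (x + 1 + n) + 1 := by push_cast; ring
      rw [h1, hder_rec _ (by positivity), ih, Finset.sum_range_succ]
      push_cast; ring
  -- squeeze
  have hub : ∀ n : ℕ, 1 ≤ n →
      deriv (fun y => Real.log (Real.Gamma y)) (x + 1) - (Real.log (x + n) -
        ∑ k ∈ Finset.range n, 1 / (x + k + 1)) ≤ Real.log (x + n + 1) - Real.log (x + n) := by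
    intro n hn
    have hxn : (0:ℝ) < x + n := by
      have : (1:ℝ) ≤ n := by exact_mod_cast hn
      linarith
    have h2 := (hslope (x + 1 + n) (by positivity)).1
    rw [hsum n] at h2
    have h3 : Real.log (x + 1 + n) = Real.log (x + n + 1) := by ring_nf
    rw [h3] at h2
    simp only [← hf]
    linarith
  have hlb : ∀ n : ℕ, 1 ≤ n →
      0 ≤ deriv (fun y => Real.log (Real.Gamma y)) (x + 1) - (Real.log (x + n) -
        ∑ k ∈ Finset.range n, 1 / (x + k + 1)) := by
    intro n hn
    have hxn : (0:ℝ) < x + n := by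
      have : (1:ℝ) ≤ n := by exact_mod_cast hn
      linarith
    have h2 := (hslope (x + n) hxn).2
    have h3 : x + n + 1 = x + 1 + n := by ring
    rw [h3, hsum n] at h2
    simp only [← hf]
    linarith
  have hdiff : Tendsto (fun n : ℕ => Real.log (x + n + 1) - Real.log (x + n)) atTop (𝓝 0) := by
    have hxn : Tendsto (fun n : ℕ => x + n) atTop atTop :=
      tendsto_atTop_add_const_left _ x tendsto_natCast_atTop_atTop
    have h1 : Tendsto (fun n : ℕ => 1 + (x + n)⁻¹) atTop (𝓝 1) := by
      simpa using (tendsto_const_nhds (x := (1:ℝ))).add hxn.inv_tendsto_atTop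
    have h2 : Tendsto (fun n : ℕ => Real.log (1 + (x + n)⁻¹)) atTop (𝓝 0) := by
      have := ((Real.continuousAt_log one_ne_zero).tendsto.comp h1)
      simpa [Function.comp_def] using this
    apply h2.congr'
    filter_upwards [hxn.eventually_gt_atTop 0] with n hn
    rw [← Real.log_div (by positivity) hn.ne']
    congr 1
    field_simp
  have hz : Tendsto (fun n : ℕ => deriv (fun y => Real.log (Real.Gamma y)) (x + 1) -
      (Real.log (x + n) - ∑ k ∈ Finset.range n, 1 / (x + k + 1))) atTop (𝓝 0) := by
    apply squeeze_zero'
    · filter_upwards [eventually_ge_atTop 1] with n hn using hlb n hn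
    · filter_upwards [eventually_ge_atTop 1] with n hn using hub n hn
    · exact hdiff
  have := (tendsto_const_nhds (x := deriv (fun y => Real.log (Real.Gamma y)) (x + 1))).sub hz
  simpa using this

lemma rpow_cont {c : ℝ} (hc : 0 ≤ c) : Continuous fun t : ℝ => t ^ c :=
  continuous_iff_continuousAt.mpr fun t => Real.continuousAt_rpow_const t c (Or.inr hc)

lemma F_eq {x t : ℝ} (hx : 0 ≤ x) (ht : 0 < t) (n : ℕ) :
    ∑ k ∈ Finset.range n, (t ^ (k : ℕ) - t ^ (x + k)) =
      (1 - t ^ x) * ∑ k ∈ Finset.range n, t ^ (k : ℕ) := by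
  rw [Finset.mul_sum]
  refine Finset.sum_congr rfl fun k _ => ?_
  rw [Real.rpow_add ht, Real.rpow_natCast]
  ring

lemma tendsto_sum_to_integral {x : ℝ} (hx : 0 ≤ x) :
    Tendsto (fun n : ℕ => ∑ k ∈ Finset.range n, (1 / ((k : ℝ) + 1) - 1 / (x + k + 1))) atTop
      (𝓝 (∫ t in (0:ℝ)..1, (1 - t ^ x) / (1 - t))) := by
  have hFc : ∀ n : ℕ, Continuous fun t : ℝ => ∑ k ∈ Finset.range n, (t ^ (k:ℕ) - t ^ (x + k)) := by
    intro n
    exact continuous_finset_sum _ fun k _ =>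
      (continuous_pow k).sub (rpow_cont (by positivity))
  have key := intervalIntegral.tendsto_integral_filter_of_dominated_convergence
      (μ := volume) (a := (0:ℝ)) (b := 1) (l := atTop)
      (F := fun (n : ℕ) (t : ℝ) => ∑ k ∈ Finset.range n, (t ^ (k:ℕ) - t ^ (x + k)))
      (f := fun t => (1 - t ^ x) / (1 - t))
      (bound := fun _ => max 1 x)
      (Filter.Eventually.of_forall fun n => (hFc n).aestronglyMeasurable)
      ?_ (intervalIntegrable_const) ?_
  · -- rewrite the integrals of F n
    convert key using 2 with n
    rw [intervalIntegral.integral_finset_sum]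
    · refine Finset.sum_congr rfl fun k _ => ?_
      rw [intervalIntegral.integral_sub ((continuous_pow k).intervalIntegrable _ _)
        (intervalIntegrable_rpow' (lt_of_lt_of_le neg_one_lt_zero (by positivity))), integral_pow,
        integral_rpow (Or.inl (lt_of_lt_of_le neg_one_lt_zero (by positivity)))]
      rw [Real.one_rpow, Real.zero_rpow (by positivity)]
      push_cast
      norm_num
    · exact fun k _ => ((continuous_pow k).intervalIntegrable _ _).sub
        (intervalIntegrable_rpow' (lt_of_lt_of_le neg_one_lt_zero (by positivity)))
  · -- bound
    refine Filter.Eventually.of_forall fun n => Filter.Eventually.of_forall fun t ht => ?_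
    rw [Set.uIoc_of_le (by norm_num : (0:ℝ) ≤ 1)] at ht
    beta_reduce
    rw [F_eq hx ht.1 n]
    have h1x : 0 ≤ 1 - t ^ x := by
      have := Real.rpow_le_one ht.1.le ht.2 hx
      linarith
    have hsnn : 0 ≤ ∑ k ∈ Finset.range n, t ^ (k:ℕ) :=
      Finset.sum_nonneg fun k _ => pow_nonneg ht.1.le k
    rw [Real.norm_eq_abs, abs_of_nonneg (mul_nonneg h1x hsnn)]
    rcases eq_or_lt_of_le ht.2 with h1 | h1
    · simp [h1]
    · have hgeo : ∑ k ∈ Finset.range n, t ^ (k:ℕ) ≤ (1 - t)⁻¹ :=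
        Summable.sum_le_tsum _ (fun k _ => pow_nonneg ht.1.le k)
          (summable_geometric_of_lt_one ht.1.le h1) |>.trans
          (le_of_eq (tsum_geometric_of_lt_one ht.1.le h1))
      calc (1 - t ^ x) * ∑ k ∈ Finset.range n, t ^ (k:ℕ)
          ≤ (max 1 x * (1 - t)) * (1 - t)⁻¹ := by
            exact mul_le_mul (key_bound hx ht.1.le ht.2) hgeo hsnn
              (mul_nonneg (le_trans zero_le_one (le_max_left 1 x)) (by linarith))
        _ = max 1 x := by
            rw [mul_assoc, mul_inv_cancel₀ (sub_pos.mpr h1).ne', mul_one]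
  · -- pointwise limit
    have hne : ∀ᵐ t : ℝ, t ≠ (1:ℝ) := by
      rw [MeasureTheory.ae_iff]
      simpa using Real.volume_singleton
    filter_upwards [hne] with t htne ht
    rw [Set.uIoc_of_le (by norm_num : (0:ℝ) ≤ 1)] at ht
    have h1 : t < 1 := lt_of_le_of_ne ht.2 htne
    have hgeo := (hasSum_geometric_of_lt_one ht.1.le h1).tendsto_sum_nat
    have := hgeo.const_mul (1 - t ^ x)
    rw [div_eq_mul_inv]
    apply this.congr fun n => (F_eq hx ht.1 n).symm

lemma gauss_digamma {x : ℝ} (hx : 0 ≤ x) :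
    ∫ t in (0:ℝ)..1, (1 - t ^ x) / (1 - t) =
      deriv (fun y => Real.log (Real.Gamma y)) (x + 1) + Real.eulerMascheroniConstant := by
  have h1 := tendsto_log_sub_sum hx
  have h2 := Real.tendsto_harmonic_sub_log
  have h3 : Tendsto (fun n : ℕ => Real.log n - Real.log (x + n)) atTop (𝓝 0) := by
    have hxn : Tendsto (fun n : ℕ => (n : ℝ)) atTop atTop := tendsto_natCast_atTop_atTop
    have hq : Tendsto (fun n : ℕ => 1 + x * (n : ℝ)⁻¹) atTop (𝓝 1) := by
      have := hxn.inv_tendsto_atTop.const_mul x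
      simpa using (tendsto_const_nhds (x := (1:ℝ))).add this
    have h4 : Tendsto (fun n : ℕ => Real.log (1 + x * (n:ℝ)⁻¹)) atTop (𝓝 0) := by
      have := (Real.continuousAt_log one_ne_zero).tendsto.comp hq
      simpa [Function.comp_def] using this
    have h5 : Tendsto (fun n : ℕ => -Real.log (1 + x * (n:ℝ)⁻¹)) atTop (𝓝 0) := by
      simpa using h4.neg
    apply h5.congr'
    filter_upwards [eventually_gt_atTop 0] with n hn
    have hn' : (0:ℝ) < n := by exact_mod_cast hn
    have heq2 : Real.log (x + n) - Real.log n = Real.log (1 + x * (n:ℝ)⁻¹) := by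
      rw [← Real.log_div (by positivity) hn'.ne']
      congr 1
      field_simp
      ring
    linarith
  have hcomb := (h1.add h2).add h3
  rw [add_zero] at hcomb
  have heq : (fun n : ℕ => Real.log (x + n) - ∑ k ∈ Finset.range n, 1 / (x + k + 1) +
      ((harmonic n : ℝ) - Real.log n) + (Real.log n - Real.log (x + n))) =
      fun n : ℕ => ∑ k ∈ Finset.range n, (1 / ((k : ℝ) + 1) - 1 / (x + k + 1)) := by
    funext n
    rw [Finset.sum_sub_distrib]
    have : (harmonic n : ℝ) = ∑ k ∈ Finset.range n, 1 / ((k : ℝ) + 1) := by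
      rw [harmonic]
      push_cast
      simp [one_div]
    rw [this]
    ring
  rw [heq] at hcomb
  exact tendsto_nhds_unique (tendsto_sum_to_integral hx) hcomb

lemma g_norm_bound {x t : ℝ} (hx : 0 ≤ x) (ht : t ∈ Set.Ioc (0:ℝ) 1) :
    ‖(1 - t ^ x) / (1 - t)‖ ≤ max 1 x := by
  rcases eq_or_lt_of_le ht.2 with h1 | h1
  · simp [h1]
  · have hpos : 0 < 1 - t := by linarith
    have h1x : 0 ≤ 1 - t ^ x := by
      have := Real.rpow_le_one ht.1.le ht.2 hx
      linarith
    rw [Real.norm_eq_abs, abs_of_nonneg (div_nonneg h1x hpos.le), div_le_iff₀ hpos]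
    exact key_bound hx ht.1.le ht.2

lemma g_intervalIntegrable {x : ℝ} (hx : 0 ≤ x) :
    IntervalIntegrable (fun t : ℝ => (1 - t ^ x) / (1 - t)) volume 0 1 := by
  rw [intervalIntegrable_iff, Set.uIoc_of_le (by norm_num : (0:ℝ) ≤ 1)]
  apply MeasureTheory.Measure.integrableOn_of_bounded (M := max 1 x) measure_Ioc_lt_top.ne
  · exact (((continuous_const.sub (rpow_cont hx)).measurable).div ((continuous_const.sub continuous_id).measurable)).aestronglyMeasurable
  · rw [MeasureTheory.ae_restrict_iff' measurableSet_Ioc]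
    exact Filter.Eventually.of_forall fun t ht => g_norm_bound hx ht

noncomputable def digamma (x : ℝ) : ℝ := deriv (fun y => Real.log (Real.Gamma y)) x

noncomputable def Hp (p x : ℝ) : ℝ := ∫ t in (0:ℝ)..1, (1 - (1 - p + p * t) ^ x) / (1 - t)

theorem Hp_eq (p x : ℝ) (hp : p ∈ Set.Ioc (0:ℝ) 1) (hx : 0 ≤ x) :
    Hp p x = digamma (x + 1) + Real.eulerMascheroniConstant + Real.log p +
      ∫ z in (0:ℝ)..(1 - p), z ^ x / (1 - z) := by
  obtain ⟨hp0, hp1⟩ := hp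
  set g : ℝ → ℝ := fun z => (1 - z ^ x) / (1 - z) with hg
  have step1 : Hp p x = ∫ z in (1 - p)..1, g z := by
    have hint : ∀ t : ℝ, (1 - (1 - p + p * t) ^ x) / (1 - t) = p * g (1 - p + p * t) := by
      intro t
      have h : (1:ℝ) - (1 - p + p * t) = p * (1 - t) := by ring
      simp only [hg]
      rw [h, div_mul_eq_div_div_swap, mul_comm p (_ / p), div_mul_cancel₀ _ hp0.ne']
    rw [Hp]
    simp_rw [hint]
    rw [intervalIntegral.integral_const_mul, ← smul_eq_mul,
      intervalIntegral.smul_integral_comp_add_mul g p (1 - p)]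
    norm_num
  have hI01 := g_intervalIntegrable hx
  have h0p : (0:ℝ) ≤ 1 - p := by linarith
  have hsub1 : IntervalIntegrable g volume 0 (1 - p) := hI01.mono_set (by
    rw [Set.uIcc_of_le h0p, Set.uIcc_of_le (by norm_num : (0:ℝ) ≤ 1)]
    exact Set.Icc_subset_Icc le_rfl (by linarith))
  have hsub2 : IntervalIntegrable g volume (1 - p) 1 := hI01.mono_set (by
    rw [Set.uIcc_of_le (by linarith : 1 - p ≤ (1:ℝ)), Set.uIcc_of_le (by norm_num : (0:ℝ) ≤ 1)]
    exact Set.Icc_subset_Icc h0p le_rfl)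
  have hadj := intervalIntegral.integral_add_adjacent_intervals hsub1 hsub2
  have hgauss := gauss_digamma hx
  have hdne : ∀ z ∈ Set.uIcc (0:ℝ) (1 - p), (1:ℝ) - z ≠ 0 := by
    intro z hz
    rw [Set.uIcc_of_le h0p] at hz
    have := hz.2
    intro h
    have : z = 1 := by linarith
    linarith [hz.2, this]
  have hA : IntervalIntegrable (fun z : ℝ => 1 / (1 - z)) volume 0 (1 - p) :=
    (ContinuousOn.div continuousOn_const
      (continuous_const.sub continuous_id).continuousOn hdne).intervalIntegrable
  have hB : IntervalIntegrable (fun z : ℝ => z ^ x / (1 - z)) volume 0 (1 - p) :=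
    (ContinuousOn.div (rpow_cont hx).continuousOn
      (continuous_const.sub continuous_id).continuousOn hdne).intervalIntegrable
  have hsplit : ∫ z in (0:ℝ)..(1 - p), g z =
      (∫ z in (0:ℝ)..(1 - p), 1 / (1 - z)) - ∫ z in (0:ℝ)..(1 - p), z ^ x / (1 - z) := by
    rw [← intervalIntegral.integral_sub hA hB]
    apply intervalIntegral.integral_congr
    intro z _
    simp only [hg]
    rw [div_sub_div_same]
  have hlog : ∫ z in (0:ℝ)..(1 - p), 1 / (1 - z) = -Real.log p := by
    have h1 := intervalIntegral.integral_comp_sub_left (a := (0:ℝ)) (b := 1 - p)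
      (fun u => 1 / u) 1
    rw [h1, show (1:ℝ) - (1 - p) = p by ring, show (1:ℝ) - 0 = 1 by ring,
      integral_one_div (by
        rw [Set.uIcc_of_le hp1]
        intro h
        exact absurd h.1 (not_le.mpr hp0)), one_div, Real.log_inv]
  have hfinal : ∫ z in (1 - p)..1, g z = (∫ z in (0:ℝ)..1, g z) - ∫ z in (0:ℝ)..(1 - p), g z := by
    linarith
  rw [step1, hfinal, hsplit, hlog]
  have : (∫ z in (0:ℝ)..1, g z) =
      deriv (fun y => Real.log (Real.Gamma y)) (x + 1) + Real.eulerMascheroniConstant := hgauss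
  rw [this, digamma]
  ring
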